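/- arXiv:1108.1100 — 5 statements merged into one kernel-verified Lean document; each statement's English description precedes it below -/
import Mathlib

section
/- Let X be a bicomplex of R-modules with exact rows and columns (i.e. H'(X) = 0 and H''(X) = 0). Then for every (i,j) ∈ ℤ×ℤ, the image d'(Z''(X)^{(i-1,j)}) and the image d''(Z'(X)^{(i,j-1)}) are equal as submodules of X^{(i,j)}. -/
/-- Let `X` be a bicomplex of `R`-modules (horizontal differential
`d₁` of bidegree `(1,0)`, vertical differential `d₂` of bidegree `(0,1)`, squaring to
zero and commuting) with exact rows and columns (`H'(X) = H''(X) = 0`).  Then at every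
position the image `d'(Z''(X))` equals the image `d''(Z'(X))` as submodules.
(Positions are shifted: the conclusion at `(i, j)` below is the assertion of the
statement at position `(i+1, j+1)`, which covers all of `ℤ × ℤ`.) -/
theorem stmt0 {R : Type*} [Ring R] (X : ℤ → ℤ → Type*)
    [∀ i j, AddCommGroup (X i j)] [∀ i j, Module R (X i j)]
    (d₁ : ∀ i j, X i j →ₗ[R] X (i + 1) j)
    (d₂ : ∀ i j, X i j →ₗ[R] X i (j + 1))
    (hd₁ : ∀ i j, (d₁ (i + 1) j).comp (d₁ i j) = 0)
    (hd₂ : ∀ i j, (d₂ i (j + 1)).comp (d₂ i j) = 0)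
    (hcomm : ∀ i j, (d₂ (i + 1) j).comp (d₁ i j) = (d₁ i (j + 1)).comp (d₂ i j))
    (hexact₁ : ∀ i j, LinearMap.ker (d₁ (i + 1) j) = LinearMap.range (d₁ i j))
    (hexact₂ : ∀ i j, LinearMap.ker (d₂ i (j + 1)) = LinearMap.range (d₂ i j)) :
    ∀ i j : ℤ,
      Submodule.map (d₁ i (j + 1)) (LinearMap.ker (d₂ i (j + 1))) =
        Submodule.map (d₂ (i + 1) j) (LinearMap.ker (d₁ (i + 1) j)) := by
  intro i j
  apply le_antisymm
  · rintro _ ⟨x, hx, rfl⟩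
    rw [SetLike.mem_coe] at hx
    obtain ⟨y, rfl⟩ := (hexact₂ i j ▸ hx : x ∈ LinearMap.range (d₂ i j))
    refine ⟨d₁ i j y, ?_, ?_⟩
    · simpa using LinearMap.congr_fun (hd₁ i j) y
    · exact LinearMap.congr_fun (hcomm i j) y
  · rintro _ ⟨x, hx, rfl⟩
    rw [SetLike.mem_coe] at hx
    obtain ⟨y, rfl⟩ := (hexact₁ i j ▸ hx : x ∈ LinearMap.range (d₁ i j))
    refine ⟨d₂ i j y, ?_, ?_⟩
    · simpa using LinearMap.congr_fun (hd₂ i j) y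
    · exact (LinearMap.congr_fun (hcomm i j) y).symm
end

section
/- Let X be a bicomplex of R-modules with exact rows and columns (H'(X) = H''(X) = 0). Then the homology of the complex (Z''(X), d') at position (i,j) is isomorphic to the homology of the complex (Z'(X), d'') at position (i,j), both being isomorphic to (Z'(X)^{(i,j)} ∩ Z''(X)^{(i,j)}) / d'(Z''(X)^{(i-1,j)}) = (Z'(X)^{(i,j)} ∩ Z''(X)^{(i,j)}) / d''(Z'(X)^{(i,j-1)}). (First part of Theorem 2.1: H'(Z''(X)) = H''(Z'(X)).) -/
/-- The homology of a three-term sequence `M →f→ N →g→ P` at `N`: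
`ker g` modulo (the pullback to `ker g` of) `range f`. -/
abbrev homologyOf {R M N P : Type*} [Ring R] [AddCommGroup M] [Module R M]
    [AddCommGroup N] [Module R N] [AddCommGroup P] [Module R P]
    (f : M →ₗ[R] N) (g : N →ₗ[R] P) : Type _ :=
  ↥(LinearMap.ker g) ⧸
    Submodule.comap (LinearMap.ker g).subtype (LinearMap.range f)

/-- Auxiliary lemma: homology of an induced complex on kernels, identified with a
subquotient of the ambient module. -/
lemma homologyOf_aux {R X₁ X₂ X₃ : Type*} [Ring R] [AddCommGroup X₁] [Module R X₁]
    [AddCommGroup X₂] [Module R X₂] [AddCommGroup X₃] [Module R X₃]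
    {p : Submodule R X₁} {q : Submodule R X₂} {r : Submodule R X₃}
    {g₁ : X₁ →ₗ[R] X₂} {g₂ : X₂ →ₗ[R] X₃}
    (e₁ : ↥p →ₗ[R] ↥q) (e₂ : ↥q →ₗ[R] ↥r)
    (he₁ : ∀ x : ↥p, ((e₁ x : X₂)) = g₁ (x : X₁))
    (he₂ : ∀ x : ↥q, ((e₂ x : X₃)) = g₂ (x : X₂))
    (t : Submodule R X₂)
    (ht : ∀ x : X₂, x ∈ t ↔ g₂ x = 0 ∧ x ∈ q) :
    Nonempty (homologyOf e₁ e₂ ≃ₗ[R]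
      ↥t ⧸ Submodule.comap t.subtype (Submodule.map g₁ p)) := by
  have hmem : ∀ x : ↥(LinearMap.ker e₂), ((x : ↥q) : X₂) ∈ t := by
    intro x
    refine (ht _).2 ⟨?_, (x : ↥q).2⟩
    rw [← he₂]
    exact congrArg Subtype.val x.2
  set jmap : ↥(LinearMap.ker e₂) →ₗ[R] ↥t :=
    LinearMap.codRestrict t (q.subtype.comp (LinearMap.ker e₂).subtype) hmem with hjmap
  set π := (Submodule.mkQ (Submodule.comap t.subtype (Submodule.map g₁ p))).comp jmap
    with hπ
  have hsurj : Function.Surjective π := by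
    intro y
    obtain ⟨y, rfl⟩ := Submodule.Quotient.mk_surjective _ y
    obtain ⟨hy1, hy2⟩ := (ht y.1).1 y.2
    have hb : e₂ ⟨y.1, hy2⟩ = 0 := by
      apply Subtype.ext
      rw [he₂ ⟨y.1, hy2⟩]
      exact hy1
    refine ⟨⟨⟨y.1, hy2⟩, hb⟩, ?_⟩
    show Submodule.Quotient.mk (jmap ⟨⟨y.1, hy2⟩, hb⟩) = Submodule.Quotient.mk y
    congr 1
  have hker : LinearMap.ker π =
      Submodule.comap (LinearMap.ker e₂).subtype (LinearMap.range e₁) := by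
    ext x
    have h1 : x ∈ LinearMap.ker π ↔
        ((x : ↥q) : X₂) ∈ Submodule.map g₁ p := by
      rw [hπ]
      simp only [LinearMap.mem_ker, LinearMap.comp_apply, Submodule.mkQ_apply,
        Submodule.Quotient.mk_eq_zero, Submodule.mem_comap]
      rfl
    rw [h1]
    simp only [Submodule.mem_comap, Submodule.mem_map, LinearMap.mem_range,
      Submodule.coe_subtype]
    constructor
    · rintro ⟨a, ha, hax⟩
      exact ⟨⟨a, ha⟩, Subtype.ext (by rw [he₁]; exact hax)⟩
    · rintro ⟨a, hax⟩
      exact ⟨a.1, a.2, by rw [← he₁]; exact congrArg Subtype.val hax⟩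
  exact ⟨(Submodule.quotEquivOfEq _ _ hker.symm).trans
    (π.quotKerEquivOfSurjective hsurj)⟩


/-- first part of Theorem 2.1.  Let `X` be a bicomplex of
`R`-modules with exact rows and columns (`H'(X) = H''(X) = 0`); `e` (resp. `f`)
denotes the differential of the complex `Z''(X)` induced by `d₁` (resp. of `Z'(X)`
induced by `d₂`).  Then at every position `(i+1, j+1)`: the boundary submodules
`d'(Z''(X))` and `d''(Z'(X))` coincide, the homology of `(Z''(X), d')` is
isomorphic to `(Z'(X) ⊓ Z''(X)) / d'(Z''(X))`, the homology of `(Z'(X), d'')` is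
isomorphic to `(Z'(X) ⊓ Z''(X)) / d''(Z'(X))`, and consequently
`H'(Z''(X)) ≅ H''(Z'(X))`. -/

theorem stmt2 {R : Type*} [Ring R] (X : ℤ → ℤ → Type*)
    [∀ i j, AddCommGroup (X i j)] [∀ i j, Module R (X i j)]
    (d₁ : ∀ i j, X i j →ₗ[R] X (i + 1) j)
    (d₂ : ∀ i j, X i j →ₗ[R] X i (j + 1))
    (hd₁ : ∀ i j, (d₁ (i + 1) j).comp (d₁ i j) = 0)
    (hd₂ : ∀ i j, (d₂ i (j + 1)).comp (d₂ i j) = 0)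
    (hcomm : ∀ i j, (d₂ (i + 1) j).comp (d₁ i j) = (d₁ i (j + 1)).comp (d₂ i j))
    (hexact₁ : ∀ i j, LinearMap.ker (d₁ (i + 1) j) = LinearMap.range (d₁ i j))
    (hexact₂ : ∀ i j, LinearMap.ker (d₂ i (j + 1)) = LinearMap.range (d₂ i j))
    -- `e` is the differential of the complex `Z''(X)`, induced by `d₁`
    (e : ∀ i j, ↥(LinearMap.ker (d₂ i j)) →ₗ[R] ↥(LinearMap.ker (d₂ (i + 1) j)))
    (he : ∀ i j (x : ↥(LinearMap.ker (d₂ i j))),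
      (e i j x : X (i + 1) j) = d₁ i j (x : X i j))
    -- `f` is the differential of the complex `Z'(X)`, induced by `d₂`
    (f : ∀ i j, ↥(LinearMap.ker (d₁ i j)) →ₗ[R] ↥(LinearMap.ker (d₁ i (j + 1))))
    (hf : ∀ i j (x : ↥(LinearMap.ker (d₁ i j))),
      (f i j x : X i (j + 1)) = d₂ i j (x : X i j)) :
    ∀ i j : ℤ,
      Submodule.map (d₁ i (j + 1)) (LinearMap.ker (d₂ i (j + 1))) =
        Submodule.map (d₂ (i + 1) j) (LinearMap.ker (d₁ (i + 1) j)) ∧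
      Nonempty (homologyOf (e i (j + 1)) (e (i + 1) (j + 1)) ≃ₗ[R]
        (↥(LinearMap.ker (d₁ (i + 1) (j + 1)) ⊓ LinearMap.ker (d₂ (i + 1) (j + 1))) ⧸
          Submodule.comap
            (LinearMap.ker (d₁ (i + 1) (j + 1)) ⊓
              LinearMap.ker (d₂ (i + 1) (j + 1))).subtype
            (Submodule.map (d₁ i (j + 1)) (LinearMap.ker (d₂ i (j + 1)))))) ∧
      Nonempty (homologyOf (f (i + 1) j) (f (i + 1) (j + 1)) ≃ₗ[R]
        (↥(LinearMap.ker (d₁ (i + 1) (j + 1)) ⊓ LinearMap.ker (d₂ (i + 1) (j + 1))) ⧸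
          Submodule.comap
            (LinearMap.ker (d₁ (i + 1) (j + 1)) ⊓
              LinearMap.ker (d₂ (i + 1) (j + 1))).subtype
            (Submodule.map (d₂ (i + 1) j) (LinearMap.ker (d₁ (i + 1) j))))) ∧
      Nonempty (homologyOf (e i (j + 1)) (e (i + 1) (j + 1)) ≃ₗ[R]
        homologyOf (f (i + 1) j) (f (i + 1) (j + 1))) := by
  intro i j
  -- Part 1: the boundary submodules coincide
  have part1 : Submodule.map (d₁ i (j + 1)) (LinearMap.ker (d₂ i (j + 1))) =
      Submodule.map (d₂ (i + 1) j) (LinearMap.ker (d₁ (i + 1) j)) := by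
    apply le_antisymm
    · rintro x ⟨a, ha, rfl⟩
      have ha' : a ∈ LinearMap.range (d₂ i j) := by
        rw [← hexact₂ i j]; exact ha
      obtain ⟨b, rfl⟩ := ha'
      have hc : d₁ i (j + 1) (d₂ i j b) = d₂ (i + 1) j (d₁ i j b) :=
        (LinearMap.congr_fun (hcomm i j) b).symm
      rw [hc]
      exact ⟨d₁ i j b, LinearMap.congr_fun (hd₁ i j) b, rfl⟩
    · rintro x ⟨a, ha, rfl⟩
      have ha' : a ∈ LinearMap.range (d₁ i j) := by
        rw [← hexact₁ i j]; exact ha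
      obtain ⟨b, rfl⟩ := ha'
      have hc : d₂ (i + 1) j (d₁ i j b) = d₁ i (j + 1) (d₂ i j b) :=
        LinearMap.congr_fun (hcomm i j) b
      rw [hc]
      exact ⟨d₂ i j b, LinearMap.congr_fun (hd₂ i j) b, rfl⟩
  have part2 := homologyOf_aux (e i (j + 1)) (e (i + 1) (j + 1))
    (he i (j + 1)) (he (i + 1) (j + 1))
    (LinearMap.ker (d₁ (i + 1) (j + 1)) ⊓ LinearMap.ker (d₂ (i + 1) (j + 1)))
    (fun x => by simp [Submodule.mem_inf, LinearMap.mem_ker])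
  have part3 := homologyOf_aux (f (i + 1) j) (f (i + 1) (j + 1))
    (hf (i + 1) j) (hf (i + 1) (j + 1))
    (LinearMap.ker (d₁ (i + 1) (j + 1)) ⊓ LinearMap.ker (d₂ (i + 1) (j + 1)))
    (fun x => by simp [Submodule.mem_inf, LinearMap.mem_ker, and_comm])
  refine ⟨part1, part2, part3, ?_⟩
  obtain ⟨a⟩ := part2
  obtain ⟨b⟩ := part3
  exact ⟨a.trans ((Submodule.quotEquivOfEq _ _ (by rw [part1])).trans b.symm)⟩
end

section
/- Let X be a bicomplex of R-modules with exact rows and columns (H'(X) = H''(X) = 0), and for each (i,j) let H(X)^{(i,j)} = (Z'(X)^{(i,j)} ∩ Z''(X)^{(i,j)}) / d'(Z''(X)^{(i-1,j)}). Suppose x ∈ Z'(X)^{(i,j)} ∩ Z''(X)^{(i,j)} and y ∈ X^{(i,j-1)} satisfy d''(y) = x. Then: (a) d'(y) ∈ Z'(X)^{(i+1,j-1)} ∩ Z''(X)^{(i+1,j-1)}; and (b) if x̄ ∈ Z'(X)^{(i,j)} ∩ Z''(X)^{(i,j)} with x̄ − x ∈ d'(Z''(X)^{(i-1,j)}) and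 ȳ ∈ X^{(i,j-1)} with d''(ȳ) = x̄, then d'(ȳ) − d'(y) ∈ d'(Z''(X)^{(i,j-1)}). Hence the assignment [x] ↦ [d'(y)] gives a well-defined R-linear map H(X)^{(i,j)} → H(X)^{(i+1,j-1)}. -/
/-- Let `X` be a bicomplex of `R`-modules with exact rows and
columns, and let `H(X)^{(i,j)} = (Z'(X)^{(i,j)} ⊓ Z''(X)^{(i,j)}) / d'(Z''(X)^{(i-1,j)})`.
Positions are shifted so that `(i, j) = (a+1, b+1)`.  Suppose
`x ∈ Z'(X)^{(a+1,b+1)} ⊓ Z''(X)^{(a+1,b+1)}` and `y ∈ X^{(a+1,b)}` satisfy `d''(y) = x`.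
Then (a) `d'(y) ∈ Z'(X)^{(a+2,b)} ⊓ Z''(X)^{(a+2,b)}`; (b) if
`x̄ ∈ Z'(X)^{(a+1,b+1)} ⊓ Z''(X)^{(a+1,b+1)}` with `x̄ - x ∈ d'(Z''(X)^{(a,b+1)})` and
`ȳ ∈ X^{(a+1,b)}` with `d''(ȳ) = x̄`, then `d'(ȳ) - d'(y) ∈ d'(Z''(X)^{(a+1,b)})`;
and hence the assignment `[x] ↦ [d'(y)]` gives a well-defined `R`-linear map
`H(X)^{(a+1,b+1)} → H(X)^{(a+2,b)}`. -/
theorem stmt3 {R : Type*} [Ring R] (X : ℤ → ℤ → Type*)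
    [∀ i j, AddCommGroup (X i j)] [∀ i j, Module R (X i j)]
    (d₁ : ∀ i j, X i j →ₗ[R] X (i + 1) j)
    (d₂ : ∀ i j, X i j →ₗ[R] X i (j + 1))
    (hd₁ : ∀ i j, (d₁ (i + 1) j).comp (d₁ i j) = 0)
    (hd₂ : ∀ i j, (d₂ i (j + 1)).comp (d₂ i j) = 0)
    (hcomm : ∀ i j, (d₂ (i + 1) j).comp (d₁ i j) = (d₁ i (j + 1)).comp (d₂ i j))
    (hexact₁ : ∀ i j, LinearMap.ker (d₁ (i + 1) j) = LinearMap.range (d₁ i j))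
    (hexact₂ : ∀ i j, LinearMap.ker (d₂ i (j + 1)) = LinearMap.range (d₂ i j))
    (a b : ℤ)
    (x : X (a + 1) (b + 1))
    (hx : x ∈ LinearMap.ker (d₁ (a + 1) (b + 1)) ⊓ LinearMap.ker (d₂ (a + 1) (b + 1)))
    (y : X (a + 1) b) (hy : d₂ (a + 1) b y = x) :
    -- (a)
    (d₁ (a + 1) b y ∈ LinearMap.ker (d₁ (a + 1 + 1) b) ⊓ LinearMap.ker (d₂ (a + 1 + 1) b)) ∧
    -- (b)
    (∀ x' : X (a + 1) (b + 1),
      x' ∈ LinearMap.ker (d₁ (a + 1) (b + 1)) ⊓ LinearMap.ker (d₂ (a + 1) (b + 1)) →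
      x' - x ∈ Submodule.map (d₁ a (b + 1)) (LinearMap.ker (d₂ a (b + 1))) →
      ∀ y' : X (a + 1) b, d₂ (a + 1) b y' = x' →
        d₁ (a + 1) b y' - d₁ (a + 1) b y ∈
          Submodule.map (d₁ (a + 1) b) (LinearMap.ker (d₂ (a + 1) b))) ∧
    -- hence: a well-defined `R`-linear map `H(X)^{(a+1,b+1)} → H(X)^{(a+2,b)}`
    (∃ φ :
      (↥(LinearMap.ker (d₁ (a + 1) (b + 1)) ⊓ LinearMap.ker (d₂ (a + 1) (b + 1))) ⧸
        Submodule.comap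
          (LinearMap.ker (d₁ (a + 1) (b + 1)) ⊓ LinearMap.ker (d₂ (a + 1) (b + 1))).subtype
          (Submodule.map (d₁ a (b + 1)) (LinearMap.ker (d₂ a (b + 1))))) →ₗ[R]
      (↥(LinearMap.ker (d₁ (a + 1 + 1) b) ⊓ LinearMap.ker (d₂ (a + 1 + 1) b)) ⧸
        Submodule.comap
          (LinearMap.ker (d₁ (a + 1 + 1) b) ⊓ LinearMap.ker (d₂ (a + 1 + 1) b)).subtype
          (Submodule.map (d₁ (a + 1) b) (LinearMap.ker (d₂ (a + 1) b)))),
      ∀ (u : X (a + 1) (b + 1))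
        (hu : u ∈ LinearMap.ker (d₁ (a + 1) (b + 1)) ⊓ LinearMap.ker (d₂ (a + 1) (b + 1)))
        (v : X (a + 1) b) (_ : d₂ (a + 1) b v = u)
        (hm : d₁ (a + 1) b v ∈ LinearMap.ker (d₁ (a + 1 + 1) b) ⊓ LinearMap.ker (d₂ (a + 1 + 1) b)),
        φ (Submodule.Quotient.mk ⟨u, hu⟩) =
          Submodule.Quotient.mk ⟨d₁ (a + 1) b v, hm⟩) := by
  classical
  -- basic computational facts
  have hdd : ∀ v : X (a + 1) b, d₁ (a + 1 + 1) b (d₁ (a + 1) b v) = 0 := by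
    intro v
    have := DFunLike.congr_fun (hd₁ (a + 1) b) v
    simpa using this
  have hcm : ∀ v : X (a + 1) b,
      d₂ (a + 1 + 1) b (d₁ (a + 1) b v) = d₁ (a + 1) (b + 1) (d₂ (a + 1) b v) := by
    intro v
    have := DFunLike.congr_fun (hcomm (a + 1) b) v
    simpa using this
  have hcm0 : ∀ t : X a b,
      d₂ (a + 1) b (d₁ a b t) = d₁ a (b + 1) (d₂ a b t) := by
    intro t
    have := DFunLike.congr_fun (hcomm a b) t
    simpa using this
  have hdd0 : ∀ t : X a b, d₁ (a + 1) b (d₁ a b t) = 0 := by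
    intro t
    have := DFunLike.congr_fun (hd₁ a b) t
    simpa using this
  -- membership in the target kernel intersection
  have memK₂ : ∀ v : X (a + 1) b, d₁ (a + 1) (b + 1) (d₂ (a + 1) b v) = 0 →
      d₁ (a + 1) b v ∈
        LinearMap.ker (d₁ (a + 1 + 1) b) ⊓ LinearMap.ker (d₂ (a + 1 + 1) b) := by
    intro v h
    refine Submodule.mem_inf.mpr ⟨?_, ?_⟩
    · exact LinearMap.mem_ker.mpr (hdd v)
    · exact LinearMap.mem_ker.mpr (by rw [hcm v, h])
  -- relation lemma
  have rel : ∀ v v' : X (a + 1) b, d₂ (a + 1) b v = d₂ (a + 1) b v' →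
      d₁ (a + 1) b v - d₁ (a + 1) b v' ∈
        Submodule.map (d₁ (a + 1) b) (LinearMap.ker (d₂ (a + 1) b)) := by
    intro v v' h
    exact ⟨v - v', LinearMap.mem_ker.mpr (by rw [map_sub, h, sub_self]), by rw [map_sub]⟩
  -- part (a)
  have parta : d₁ (a + 1) b y ∈
      LinearMap.ker (d₁ (a + 1 + 1) b) ⊓ LinearMap.ker (d₂ (a + 1 + 1) b) :=
    memK₂ y (by rw [hy]; exact LinearMap.mem_ker.mp (Submodule.mem_inf.mp hx).1)
  -- part (b)
  have partb : ∀ x' : X (a + 1) (b + 1),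
      x' ∈ LinearMap.ker (d₁ (a + 1) (b + 1)) ⊓ LinearMap.ker (d₂ (a + 1) (b + 1)) →
      x' - x ∈ Submodule.map (d₁ a (b + 1)) (LinearMap.ker (d₂ a (b + 1))) →
      ∀ y' : X (a + 1) b, d₂ (a + 1) b y' = x' →
        d₁ (a + 1) b y' - d₁ (a + 1) b y ∈
          Submodule.map (d₁ (a + 1) b) (LinearMap.ker (d₂ (a + 1) b)) := by
    intro x' _ hdiff y' hy'
    obtain ⟨w, hw, hwx⟩ := hdiff
    have hwrange : w ∈ LinearMap.range (d₂ a b) := (hexact₂ a b) ▸ hw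
    obtain ⟨t, ht⟩ := hwrange
    refine ⟨y' - y - d₁ a b t, LinearMap.mem_ker.mpr ?_, ?_⟩
    · rw [map_sub, map_sub, hy', hy, hcm0 t, ht, hwx]
      abel
    · rw [map_sub, map_sub, hdd0 t, sub_zero]
  refine ⟨parta, partb, ?_⟩
  -- part (c): construct the linear map
  have sec : ∀ u : ↥(LinearMap.ker (d₁ (a + 1) (b + 1)) ⊓ LinearMap.ker (d₂ (a + 1) (b + 1))),
      ∃ v : X (a + 1) b, d₂ (a + 1) b v = (u : X (a + 1) (b + 1)) := by
    intro u
    have : (u : X (a + 1) (b + 1)) ∈ LinearMap.range (d₂ (a + 1) b) :=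
      (hexact₂ (a + 1) b) ▸ (Submodule.mem_inf.mp u.2).2
    exact this
  set K₁ := LinearMap.ker (d₁ (a + 1) (b + 1)) ⊓ LinearMap.ker (d₂ (a + 1) (b + 1)) with hK₁def
  set K₂ := LinearMap.ker (d₁ (a + 1 + 1) b) ⊓ LinearMap.ker (d₂ (a + 1 + 1) b) with hK₂def
  set N := Submodule.map (d₁ (a + 1) b) (LinearMap.ker (d₂ (a + 1) b)) with hNdef
  set N₀ := Submodule.map (d₁ a (b + 1)) (LinearMap.ker (d₂ a (b + 1))) with hN0def
  let vf : ↥K₁ → X (a + 1) b := fun u => (sec u).choose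
  have hvf : ∀ u : ↥K₁, d₂ (a + 1) b (vf u) = (u : X (a + 1) (b + 1)) :=
    fun u => (sec u).choose_spec
  have hker : ∀ u : ↥K₁, d₁ (a + 1) (b + 1) (d₂ (a + 1) b (vf u)) = 0 := by
    intro u
    rw [hvf u]
    exact LinearMap.mem_ker.mp (Submodule.mem_inf.mp u.2).1
  let f : ↥K₁ → (↥K₂ ⧸ Submodule.comap K₂.subtype N) :=
    fun u => Submodule.Quotient.mk ⟨d₁ (a + 1) b (vf u), memK₂ _ (hker u)⟩
  have fchar : ∀ (u : ↥K₁) (v : X (a + 1) b),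
      d₂ (a + 1) b v = (u : X (a + 1) (b + 1)) →
      ∀ (h : d₁ (a + 1) b v ∈ K₂),
      f u = Submodule.Quotient.mk ⟨d₁ (a + 1) b v, h⟩ := by
    intro u v hv h
    refine (Submodule.Quotient.eq _).mpr ?_
    refine Submodule.mem_comap.mpr ?_
    have : K₂.subtype (⟨d₁ (a + 1) b (vf u), memK₂ _ (hker u)⟩ - ⟨d₁ (a + 1) b v, h⟩)
        = d₁ (a + 1) b (vf u) - d₁ (a + 1) b v := rfl
    rw [this]
    exact rel (vf u) v (by rw [hvf u, hv])
  have fadd : ∀ u u' : ↥K₁, f (u + u') = f u + f u' := by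
    intro u u'
    have h1 : d₂ (a + 1) b (vf u + vf u') = ((u + u' : ↥K₁) : X (a + 1) (b + 1)) := by
      rw [map_add, hvf u, hvf u']; rfl
    have h2 : d₁ (a + 1) (b + 1) (d₂ (a + 1) b (vf u + vf u')) = 0 := by
      rw [h1]
      exact LinearMap.mem_ker.mp (Submodule.mem_inf.mp (u + u').2).1
    rw [fchar (u + u') (vf u + vf u') h1 (memK₂ _ h2)]
    rw [← Submodule.Quotient.mk_add]
    exact congrArg _ (Subtype.ext (by simp [map_add]))
  have fsmul : ∀ (r : R) (u : ↥K₁), f (r • u) = r • f u := by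
    intro r u
    have h1 : d₂ (a + 1) b (r • vf u) = ((r • u : ↥K₁) : X (a + 1) (b + 1)) := by
      rw [map_smul, hvf u]; rfl
    have h2 : d₁ (a + 1) (b + 1) (d₂ (a + 1) b (r • vf u)) = 0 := by
      rw [h1]
      exact LinearMap.mem_ker.mp (Submodule.mem_inf.mp (r • u).2).1
    rw [fchar (r • u) (r • vf u) h1 (memK₂ _ h2)]
    rw [← Submodule.Quotient.mk_smul]
    exact congrArg _ (Subtype.ext (by simp [map_smul]))
  let φ₀ : ↥K₁ →ₗ[R] (↥K₂ ⧸ Submodule.comap K₂.subtype N) :=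
    { toFun := f
      map_add' := fadd
      map_smul' := fsmul }
  have hle : Submodule.comap K₁.subtype N₀ ≤ LinearMap.ker φ₀ := by
    intro u hu
    have hu' : (u : X (a + 1) (b + 1)) ∈ N₀ := hu
    obtain ⟨w, hw, hwe⟩ := hu'
    have hwrange : w ∈ LinearMap.range (d₂ a b) := (hexact₂ a b) ▸ hw
    obtain ⟨t, ht⟩ := hwrange
    have h1 : d₂ (a + 1) b (d₁ a b t) = (u : X (a + 1) (b + 1)) := by
      rw [hcm0 t, ht, hwe]
    have h2 : d₁ (a + 1) (b + 1) (d₂ (a + 1) b (d₁ a b t)) = 0 := by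
      rw [h1]
      exact LinearMap.mem_ker.mp (Submodule.mem_inf.mp u.2).1
    have : φ₀ u = f u := rfl
    rw [LinearMap.mem_ker, this, fchar u (d₁ a b t) h1 (memK₂ _ h2)]
    have hz : (⟨d₁ (a + 1) b (d₁ a b t), memK₂ _ h2⟩ : ↥K₂) = 0 :=
      Subtype.ext (by simpa using hdd0 t)
    rw [hz]
    exact Submodule.Quotient.mk_zero _
  refine ⟨Submodule.liftQ (Submodule.comap K₁.subtype N₀) φ₀ hle, ?_⟩
  intro u hu v hv' hm
  rw [Submodule.liftQ_apply]
  exact fchar ⟨u, hu⟩ v hv' hm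
end

section
/- Let X be a bicomplex of R-modules with exact rows and columns (H'(X) = H''(X) = 0), and for each (i,j) let H(X)^{(i,j)} = (Z'(X)^{(i,j)} ∩ Z''(X)^{(i,j)}) / d'(Z''(X)^{(i-1,j)}). Then for every (i,j) there is an R-linear isomorphism H(X)^{(i,j)} → H(X)^{(i+1,j-1)} sending the class of x to the class of d'(y), for any y with d''(y) = x; its inverse H(X)^{(i+1,j-1)} → H(X)^{(i,j)} sends the class of z to the class of d''(w), for any w with d'(w) = z. (Second part of Theorem 2.1: a natural isomorphism H(X) → H(X) of bidegree (1,−1).) -/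
private lemma exists_equiv_aux {R W H1 H2 : Type*} [Ring R] [AddCommGroup W] [AddCommGroup H1]
    [AddCommGroup H2] [Module R W] [Module R H1] [Module R H2]
    (f : W →ₗ[R] H1) (g : W →ₗ[R] H2) (hf : Function.Surjective f)
    (hg : Function.Surjective g) (h : LinearMap.ker f = LinearMap.ker g) :
    ∃ e : H1 ≃ₗ[R] H2, (∀ w, e (f w) = g w) ∧ (∀ w, e.symm (g w) = f w) := by
  refine ⟨(f.quotKerEquivOfSurjective hf).symm.trans
    ((Submodule.quotEquivOfEq _ _ h).trans (g.quotKerEquivOfSurjective hg)), ?_, ?_⟩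
  · intro w
    have h1 : (f.quotKerEquivOfSurjective hf).symm (f w) = Submodule.Quotient.mk w := by
      rw [LinearEquiv.symm_apply_eq]; rfl
    simp [h1, Submodule.quotEquivOfEq_mk]
  · intro w
    have h1 : (g.quotKerEquivOfSurjective hg).symm (g w) = Submodule.Quotient.mk w := by
      rw [LinearEquiv.symm_apply_eq]; rfl
    simp [h1, Submodule.quotEquivOfEq_mk]
    rfl

/-- second part of Theorem 2.1.  Let `X` be a bicomplex of
`R`-modules with exact rows and columns, and let
`H(X)^{(i,j)} = (Z'(X)^{(i,j)} ⊓ Z''(X)^{(i,j)}) / d'(Z''(X)^{(i-1,j)})`.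
Positions are shifted so that `(i, j) = (a+1, b+1)`.  Then there is an `R`-linear
isomorphism `H(X)^{(a+1,b+1)} → H(X)^{(a+2,b)}` sending the class of `x` to the
class of `d'(y)` for any `y` with `d''(y) = x`, whose inverse sends the class of
`z` to the class of `d''(w)` for any `w` with `d'(w) = z`. -/
theorem stmt4 {R : Type*} [Ring R] (X : ℤ → ℤ → Type*)
    [∀ i j, AddCommGroup (X i j)] [∀ i j, Module R (X i j)]
    (d₁ : ∀ i j, X i j →ₗ[R] X (i + 1) j)
    (d₂ : ∀ i j, X i j →ₗ[R] X i (j + 1))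
    (hd₁ : ∀ i j, (d₁ (i + 1) j).comp (d₁ i j) = 0)
    (hd₂ : ∀ i j, (d₂ i (j + 1)).comp (d₂ i j) = 0)
    (hcomm : ∀ i j, (d₂ (i + 1) j).comp (d₁ i j) = (d₁ i (j + 1)).comp (d₂ i j))
    (hexact₁ : ∀ i j, LinearMap.ker (d₁ (i + 1) j) = LinearMap.range (d₁ i j))
    (hexact₂ : ∀ i j, LinearMap.ker (d₂ i (j + 1)) = LinearMap.range (d₂ i j))
    (a b : ℤ) :
    ∃ e :
      (↥(LinearMap.ker (d₁ (a + 1) (b + 1)) ⊓ LinearMap.ker (d₂ (a + 1) (b + 1))) ⧸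
        Submodule.comap
          (LinearMap.ker (d₁ (a + 1) (b + 1)) ⊓ LinearMap.ker (d₂ (a + 1) (b + 1))).subtype
          (Submodule.map (d₁ a (b + 1)) (LinearMap.ker (d₂ a (b + 1))))) ≃ₗ[R]
      (↥(LinearMap.ker (d₁ (a + 1 + 1) b) ⊓ LinearMap.ker (d₂ (a + 1 + 1) b)) ⧸
        Submodule.comap
          (LinearMap.ker (d₁ (a + 1 + 1) b) ⊓ LinearMap.ker (d₂ (a + 1 + 1) b)).subtype
          (Submodule.map (d₁ (a + 1) b) (LinearMap.ker (d₂ (a + 1) b)))),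
      -- `e` sends the class of `x` to the class of `d'(y)` whenever `d''(y) = x`
      (∀ (x : X (a + 1) (b + 1))
        (hx : x ∈ LinearMap.ker (d₁ (a + 1) (b + 1)) ⊓ LinearMap.ker (d₂ (a + 1) (b + 1)))
        (y : X (a + 1) b) (_ : d₂ (a + 1) b y = x)
        (hm : d₁ (a + 1) b y ∈
          LinearMap.ker (d₁ (a + 1 + 1) b) ⊓ LinearMap.ker (d₂ (a + 1 + 1) b)),
        e (Submodule.Quotient.mk ⟨x, hx⟩) = Submodule.Quotient.mk ⟨d₁ (a + 1) b y, hm⟩) ∧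
      -- `e.symm` sends the class of `z` to the class of `d''(w)` whenever `d'(w) = z`
      (∀ (z : X (a + 1 + 1) b)
        (hz : z ∈ LinearMap.ker (d₁ (a + 1 + 1) b) ⊓ LinearMap.ker (d₂ (a + 1 + 1) b))
        (w : X (a + 1) b) (_ : d₁ (a + 1) b w = z)
        (hm : d₂ (a + 1) b w ∈
          LinearMap.ker (d₁ (a + 1) (b + 1)) ⊓ LinearMap.ker (d₂ (a + 1) (b + 1))),
        e.symm (Submodule.Quotient.mk ⟨z, hz⟩) =
          Submodule.Quotient.mk ⟨d₂ (a + 1) b w, hm⟩) := by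
  have hc : ∀ i j (v : X i j), d₂ (i + 1) j (d₁ i j v) = d₁ i (j + 1) (d₂ i j v) :=
    fun i j v => DFunLike.congr_fun (hcomm i j) v
  have hd₁' : ∀ i j (v : X i j), d₁ (i + 1) j (d₁ i j v) = 0 :=
    fun i j v => DFunLike.congr_fun (hd₁ i j) v
  have hd₂' : ∀ i j (v : X i j), d₂ i (j + 1) (d₂ i j v) = 0 :=
    fun i j v => DFunLike.congr_fun (hd₂ i j) v
  set K1 := LinearMap.ker (d₁ (a + 1) (b + 1)) ⊓ LinearMap.ker (d₂ (a + 1) (b + 1)) with hK1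
  set K2 := LinearMap.ker (d₁ (a + 1 + 1) b) ⊓ LinearMap.ker (d₂ (a + 1 + 1) b) with hK2
  set N1 := Submodule.comap K1.subtype
      (Submodule.map (d₁ a (b + 1)) (LinearMap.ker (d₂ a (b + 1)))) with hN1
  set N2 := Submodule.comap K2.subtype
      (Submodule.map (d₁ (a + 1) b) (LinearMap.ker (d₂ (a + 1) b))) with hN2
  set W : Submodule R (X (a + 1) b) :=
      LinearMap.ker ((d₁ (a + 1) (b + 1)).comp (d₂ (a + 1) b)) with hW
  have memW : ∀ y : X (a + 1) b, y ∈ W ↔ d₁ (a + 1) (b + 1) (d₂ (a + 1) b y) = 0 := by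
    intro y; rw [hW, LinearMap.mem_ker, LinearMap.comp_apply]
  have f₀mem : ∀ y : W, d₂ (a + 1) b y.1 ∈ K1 := by
    intro y
    exact ⟨(memW y.1).mp y.2, hd₂' _ _ _⟩
  have g₀mem : ∀ y : W, d₁ (a + 1) b y.1 ∈ K2 := by
    intro y
    refine ⟨hd₁' _ _ _, ?_⟩
    show d₂ (a + 1 + 1) b (d₁ (a + 1) b y.1) = 0
    rw [hc]; exact (memW y.1).mp y.2
  set f₀ : W →ₗ[R] K1 :=
    LinearMap.codRestrict K1 ((d₂ (a + 1) b).comp W.subtype) f₀mem with hf₀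
  set g₀ : W →ₗ[R] K2 :=
    LinearMap.codRestrict K2 ((d₁ (a + 1) b).comp W.subtype) g₀mem with hg₀
  set f := N1.mkQ.comp f₀ with hf
  set g := N2.mkQ.comp g₀ with hg
  -- surjectivity of f₀, g₀
  have hf₀s : Function.Surjective f₀ := by
    rintro ⟨x, hx⟩
    have : x ∈ LinearMap.range (d₂ (a + 1) b) := by
      rw [← hexact₂ (a + 1) b]; exact hx.2
    obtain ⟨y, hy⟩ := this
    have hyW : y ∈ W := (memW y).mpr (by rw [hy]; exact hx.1)
    exact ⟨⟨y, hyW⟩, Subtype.ext hy⟩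
  have hg₀s : Function.Surjective g₀ := by
    rintro ⟨z, hz⟩
    have : z ∈ LinearMap.range (d₁ (a + 1) b) := by
      rw [← hexact₁ (a + 1) b]; exact hz.1
    obtain ⟨y, hy⟩ := this
    have hyW : y ∈ W := by
      rw [memW, ← hc, hy]; exact hz.2
    exact ⟨⟨y, hyW⟩, Subtype.ext hy⟩
  have hfs : Function.Surjective f := (Submodule.mkQ_surjective N1).comp hf₀s
  have hgs : Function.Surjective g := (Submodule.mkQ_surjective N2).comp hg₀s
  -- kernels agree
  have hker : LinearMap.ker f = LinearMap.ker g := by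
    ext y
    rw [hf, hg, LinearMap.mem_ker, LinearMap.mem_ker, LinearMap.comp_apply,
      LinearMap.comp_apply, Submodule.mkQ_apply, Submodule.mkQ_apply,
      Submodule.Quotient.mk_eq_zero, Submodule.Quotient.mk_eq_zero,
      hN1, hN2, Submodule.mem_comap, Submodule.mem_comap]
    constructor
    · rintro h
      obtain ⟨u, hu, hu2⟩ := h
      have hu2' : d₁ a (b + 1) u = d₂ (a + 1) b y.1 := hu2
      -- u ∈ ker d₂ a (b+1) = range d₂ a b
      have : u ∈ LinearMap.range (d₂ a b) := by rw [← hexact₂ a b]; exact hu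
      obtain ⟨v, hv⟩ := this
      refine ⟨y.1 - d₁ a b v, ?_, ?_⟩
      · show d₂ (a + 1) b (y.1 - d₁ a b v) = 0
        rw [map_sub, hc, hv, hu2', sub_self]
      · show d₁ (a + 1) b (y.1 - d₁ a b v) = (K2.subtype) (g₀ y)
        rw [map_sub, hd₁', sub_zero]; rfl
    · rintro h
      obtain ⟨w, hw, hw2⟩ := h
      have hw2' : d₁ (a + 1) b w = d₁ (a + 1) b y.1 := hw2
      have : y.1 - w ∈ LinearMap.range (d₁ a b) := by
        rw [← hexact₁ a b, LinearMap.mem_ker, map_sub, hw2', sub_self]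
      obtain ⟨t, ht⟩ := this
      refine ⟨d₂ a b t, hd₂' _ _ _, ?_⟩
      show d₁ a (b + 1) (d₂ a b t) = (K1.subtype) (f₀ y)
      have : (K1.subtype) (f₀ y) = d₂ (a + 1) b y.1 := rfl
      rw [this, ← hc, ht, map_sub, hw, sub_zero]
  obtain ⟨e, hef, heg⟩ := exists_equiv_aux f g hfs hgs hker
  refine ⟨e, ?_, ?_⟩
  · intro x hx y hy hm
    have hyW : y ∈ W := (memW y).mpr (by rw [hy]; exact hx.1)
    have h1 : f ⟨y, hyW⟩ = Submodule.Quotient.mk ⟨x, hx⟩ := by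
      show Submodule.Quotient.mk (f₀ ⟨y, hyW⟩) = _
      exact congrArg _ (Subtype.ext hy)
    have h2 : g ⟨y, hyW⟩ = Submodule.Quotient.mk ⟨d₁ (a + 1) b y, hm⟩ := by
      show Submodule.Quotient.mk (g₀ ⟨y, hyW⟩) = _
      exact congrArg _ (Subtype.ext rfl)
    rw [← h1, hef, h2]
  · intro z hz w hw hm
    have hwW : w ∈ W := by rw [memW, ← hc, hw]; exact hz.2
    have h1 : g ⟨w, hwW⟩ = Submodule.Quotient.mk ⟨z, hz⟩ := by
      show Submodule.Quotient.mk (g₀ ⟨w, hwW⟩) = _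
      exact congrArg _ (Subtype.ext hw)
    have h2 : f ⟨w, hwW⟩ = Submodule.Quotient.mk ⟨d₂ (a + 1) b w, hm⟩ := by
      show Submodule.Quotient.mk (f₀ ⟨w, hwW⟩) = _
      exact congrArg _ (Subtype.ext rfl)
    rw [← h1, heg, h2]
end

section
/- Tate homology balance: Let C be an exact ℤ-indexed chain complex of flat right R-modules and D an exact ℤ-indexed chain complex of flat left R-modules. Then for every n ∈ ℤ there is an isomorphism H_n(Z_0(C) ⊗ D) ≅ H_n(C ⊗ Z_0(D)). -/
open LinearMap TensorProduct Function

section Aux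

variable {R : Type*} [CommRing R]

/-- First isomorphism theorem packaged for transporting `homologyOf`-shaped quotients. -/
noncomputable def auxQuotEquiv {P Q : Type*} [AddCommGroup P] [Module R P]
    [AddCommGroup Q] [Module R Q]
    (φ : P →ₗ[R] Q) (hφ : Function.Surjective φ) (S : Submodule R Q)
    (T U : Submodule R P) (hT : T = Submodule.comap φ S) (hU : U = LinearMap.ker φ) :
    (↥T ⧸ Submodule.comap T.subtype U) ≃ₗ[R] ↥S := by
  subst hT hU
  let ψ : ↥(Submodule.comap φ S) →ₗ[R] ↥S := φ.restrict (fun x hx => hx)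
  have hψ : Function.Surjective ψ := by
    rintro ⟨y, hy⟩
    obtain ⟨x, rfl⟩ := hφ y
    exact ⟨⟨x, hy⟩, rfl⟩
  have hker : Submodule.comap (Submodule.comap φ S).subtype (LinearMap.ker φ)
      = LinearMap.ker ψ := by
    ext x
    simp [ψ, LinearMap.mem_ker, LinearMap.restrict_apply, Subtype.ext_iff]
  exact (Submodule.quotEquivOfEq _ _ hker).trans (ψ.quotKerEquivOfSurjective hψ)

/-- Transport a `homologyOf`-shaped quotient along an injective linear map. -/
noncomputable def auxMapEquiv {P Q : Type*} [AddCommGroup P] [Module R P]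
    [AddCommGroup Q] [Module R Q] (α : P →ₗ[R] Q) (hα : Function.Injective α)
    (K S : Submodule R P) (K' S' : Submodule R Q)
    (hK : K.map α = K') (hS : S.map α = S') :
    (↥K ⧸ Submodule.comap K.subtype S) ≃ₗ[R] (↥K' ⧸ Submodule.comap K'.subtype S') := by
  subst hK hS
  refine Submodule.Quotient.equiv _ _ (Submodule.equivMapOfInjective α hα K) ?_
  ext z
  constructor
  · rintro ⟨x, hx, rfl⟩
    exact ⟨x.1, hx, rfl⟩
  · rintro ⟨s, hsS, hsz⟩
    obtain ⟨k, hk, hkz⟩ := z.2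
    have hks : k = s := hα (hkz.trans hsz.symm)
    refine ⟨⟨k, hk⟩, by simpa [hks] using hsS, ?_⟩
    apply Subtype.ext
    exact hkz

end Aux

section Key

variable {R : Type*} [CommRing R]

/-- Balancing lemma: `Tor₁(A'', B'')` computed from a flat presentation of `A''`
agrees with its computation from a flat presentation of `B''`. -/
theorem keyLemma {A B A'' B'' : Type*}
    [AddCommGroup A] [Module R A] [AddCommGroup B] [Module R B]
    [AddCommGroup A''] [Module R A''] [AddCommGroup B''] [Module R B'']
    [Module.Flat R A] [Module.Flat R B]
    (pA : A →ₗ[R] A'') (hpA : Function.Surjective pA)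
    (pB : B →ₗ[R] B'') (hpB : Function.Surjective pB)
    (A' : Submodule R A) (B' : Submodule R B)
    (hA' : LinearMap.ker pA = A') (hB' : LinearMap.ker pB = B') :
    Nonempty (↥(LinearMap.ker (rTensor B'' A'.subtype)) ≃ₗ[R]
      ↥(LinearMap.ker (lTensor A'' B'.subtype))) := by
  subst hA' hB'
  have exA : Function.Exact (LinearMap.ker pA).subtype pA := LinearMap.exact_subtype_ker_map pA
  have exB : Function.Exact (LinearMap.ker pB).subtype pB := LinearMap.exact_subtype_ker_map pB
  have hker₁ : LinearMap.ker (lTensor A pB)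
      = LinearMap.range (lTensor A (LinearMap.ker pB).subtype) :=
    LinearMap.exact_iff.mp (lTensor_exact A exB hpB)
  have hkerq₁ : LinearMap.ker (lTensor (↥(LinearMap.ker pA)) pB)
      = LinearMap.range (lTensor (↥(LinearMap.ker pA)) (LinearMap.ker pB).subtype) :=
    LinearMap.exact_iff.mp (lTensor_exact _ exB hpB)
  have hker₂ : LinearMap.ker (rTensor B pA)
      = LinearMap.range (rTensor B (LinearMap.ker pA).subtype) :=
    LinearMap.exact_iff.mp (rTensor_exact B exA hpA)
  have hkerq₂ : LinearMap.ker (rTensor (↥(LinearMap.ker pB)) pA)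
      = LinearMap.range (rTensor (↥(LinearMap.ker pB)) (LinearMap.ker pA).subtype) :=
    LinearMap.exact_iff.mp (rTensor_exact _ exA hpA)
  have hα₁ : Function.Injective (rTensor B (LinearMap.ker pA).subtype) :=
    Module.Flat.rTensor_preserves_injective_linearMap _ (Submodule.injective_subtype _)
  have hα₂ : Function.Injective (lTensor A (LinearMap.ker pB).subtype) :=
    Module.Flat.lTensor_preserves_injective_linearMap _ (Submodule.injective_subtype _)
  have hq₁ : Function.Surjective (lTensor (↥(LinearMap.ker pA)) pB) :=
    LinearMap.lTensor_surjective _ hpB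
  have hq₂ : Function.Surjective (rTensor (↥(LinearMap.ker pB)) pA) :=
    LinearMap.rTensor_surjective _ hpA
  have hcomm₁ : (lTensor A pB) ∘ₗ (rTensor B (LinearMap.ker pA).subtype)
      = (rTensor B'' (LinearMap.ker pA).subtype) ∘ₗ (lTensor (↥(LinearMap.ker pA)) pB) := by
    rw [LinearMap.lTensor_comp_rTensor, LinearMap.rTensor_comp_lTensor]
  have hcomm₂ : (rTensor B pA) ∘ₗ (lTensor A (LinearMap.ker pB).subtype)
      = (lTensor A'' (LinearMap.ker pB).subtype) ∘ₗ (rTensor (↥(LinearMap.ker pB)) pA) := by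
    rw [LinearMap.rTensor_comp_lTensor, LinearMap.lTensor_comp_rTensor]
  have e₁ := auxQuotEquiv (lTensor (↥(LinearMap.ker pA)) pB) hq₁
      (LinearMap.ker (rTensor B'' (LinearMap.ker pA).subtype))
      (LinearMap.ker ((lTensor A pB) ∘ₗ (rTensor B (LinearMap.ker pA).subtype)))
      (LinearMap.ker (lTensor (↥(LinearMap.ker pA)) pB))
      (by rw [hcomm₁, LinearMap.ker_comp]) rfl
  have e₂ := auxQuotEquiv (rTensor (↥(LinearMap.ker pB)) pA) hq₂
      (LinearMap.ker (lTensor A'' (LinearMap.ker pB).subtype))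
      (LinearMap.ker ((rTensor B pA) ∘ₗ (lTensor A (LinearMap.ker pB).subtype)))
      (LinearMap.ker (rTensor (↥(LinearMap.ker pB)) pA))
      (by rw [hcomm₂, LinearMap.ker_comp]) rfl
  have hK1 : (LinearMap.ker ((lTensor A pB) ∘ₗ (rTensor B (LinearMap.ker pA).subtype))).map
        (rTensor B (LinearMap.ker pA).subtype)
      = LinearMap.range (rTensor B (LinearMap.ker pA).subtype)
          ⊓ LinearMap.range (lTensor A (LinearMap.ker pB).subtype) := by
    rw [LinearMap.ker_comp, Submodule.map_comap_eq, hker₁]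
  have hK2 : (LinearMap.ker ((rTensor B pA) ∘ₗ (lTensor A (LinearMap.ker pB).subtype))).map
        (lTensor A (LinearMap.ker pB).subtype)
      = LinearMap.range (rTensor B (LinearMap.ker pA).subtype)
          ⊓ LinearMap.range (lTensor A (LinearMap.ker pB).subtype) := by
    rw [LinearMap.ker_comp, Submodule.map_comap_eq, hker₂, inf_comm]
  have hS1 : (LinearMap.ker (lTensor (↥(LinearMap.ker pA)) pB)).map
        (rTensor B (LinearMap.ker pA).subtype)
      = LinearMap.range (TensorProduct.map (LinearMap.ker pA).subtype
          (LinearMap.ker pB).subtype) := by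
    rw [hkerq₁, ← LinearMap.range_comp, LinearMap.rTensor_comp_lTensor]
  have hS2 : (LinearMap.ker (rTensor (↥(LinearMap.ker pB)) pA)).map
        (lTensor A (LinearMap.ker pB).subtype)
      = LinearMap.range (TensorProduct.map (LinearMap.ker pA).subtype
          (LinearMap.ker pB).subtype) := by
    rw [hkerq₂, ← LinearMap.range_comp, LinearMap.lTensor_comp_rTensor]
  exact ⟨e₁.symm.trans (((auxMapEquiv _ hα₁ _ _ _ _ hK1 hS1).trans
    (auxMapEquiv _ hα₂ _ _ _ _ hK2 hS2).symm).trans e₂)⟩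

end Key

section Steps

variable {R : Type*} [CommRing R]

theorem hstep_lT (M : Type*) [AddCommGroup M] [Module R M]
    {X Y Z : Type*} [AddCommGroup X] [Module R X] [AddCommGroup Y] [Module R Y]
    [AddCommGroup Z] [Module R Z]
    (d₂ : X →ₗ[R] Y) (d₁ : Y →ₗ[R] Z) (hd : d₁ ∘ₗ d₂ = 0)
    (hex : LinearMap.ker d₁ = LinearMap.range d₂) :
    Nonempty ((homologyOf (lTensor M d₂) (lTensor M d₁)) ≃ₗ[R]
      ↥(LinearMap.ker (lTensor M (LinearMap.range d₁).subtype))) := by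
  have hφ : Function.Surjective (lTensor M d₁.rangeRestrict) :=
    LinearMap.lTensor_surjective _ d₁.surjective_rangeRestrict
  have hfac : lTensor M d₁
      = (lTensor M (LinearMap.range d₁).subtype) ∘ₗ (lTensor M d₁.rangeRestrict) := by
    rw [← LinearMap.lTensor_comp, LinearMap.subtype_comp_codRestrict]
  have hT : LinearMap.ker (lTensor M d₁)
      = Submodule.comap (lTensor M d₁.rangeRestrict)
          (LinearMap.ker (lTensor M (LinearMap.range d₁).subtype)) := by
    rw [hfac, LinearMap.ker_comp]
  have hexRR : Function.Exact (LinearMap.ker d₁).subtype d₁.rangeRestrict :=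
    LinearMap.exact_iff.mpr (by rw [LinearMap.ker_rangeRestrict, Submodule.range_subtype])
  have hkerφ : LinearMap.ker (lTensor M d₁.rangeRestrict)
      = LinearMap.range (lTensor M (LinearMap.ker d₁).subtype) :=
    LinearMap.exact_iff.mp (lTensor_exact M hexRR d₁.surjective_rangeRestrict)
  have hd' : ∀ x, d₂ x ∈ LinearMap.ker d₁ := fun x => by
    rw [LinearMap.mem_ker, ← LinearMap.comp_apply, hd]; rfl
  have hρ : Function.Surjective (d₂.codRestrict (LinearMap.ker d₁) hd') := by
    rintro ⟨y, hy⟩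
    rw [hex] at hy
    obtain ⟨x, rfl⟩ := hy
    exact ⟨x, rfl⟩
  have hU : LinearMap.range (lTensor M d₂) = LinearMap.ker (lTensor M d₁.rangeRestrict) := by
    rw [hkerφ]
    conv_lhs => rw [← LinearMap.subtype_comp_codRestrict d₂ (LinearMap.ker d₁) hd']
    rw [LinearMap.lTensor_comp, LinearMap.range_comp_of_range_eq_top]
    rw [LinearMap.range_eq_top]
    exact LinearMap.lTensor_surjective M hρ
  exact ⟨auxQuotEquiv _ hφ _ _ _ hT hU⟩

theorem hstep_rT (N : Type*) [AddCommGroup N] [Module R N]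
    {X Y Z : Type*} [AddCommGroup X] [Module R X] [AddCommGroup Y] [Module R Y]
    [AddCommGroup Z] [Module R Z]
    (d₂ : X →ₗ[R] Y) (d₁ : Y →ₗ[R] Z) (hd : d₁ ∘ₗ d₂ = 0)
    (hex : LinearMap.ker d₁ = LinearMap.range d₂) :
    Nonempty ((homologyOf (rTensor N d₂) (rTensor N d₁)) ≃ₗ[R]
      ↥(LinearMap.ker (rTensor N (LinearMap.range d₁).subtype))) := by
  have hφ : Function.Surjective (rTensor N d₁.rangeRestrict) :=
    LinearMap.rTensor_surjective _ d₁.surjective_rangeRestrict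
  have hfac : rTensor N d₁
      = (rTensor N (LinearMap.range d₁).subtype) ∘ₗ (rTensor N d₁.rangeRestrict) := by
    rw [← LinearMap.rTensor_comp, LinearMap.subtype_comp_codRestrict]
  have hT : LinearMap.ker (rTensor N d₁)
      = Submodule.comap (rTensor N d₁.rangeRestrict)
          (LinearMap.ker (rTensor N (LinearMap.range d₁).subtype)) := by
    rw [hfac, LinearMap.ker_comp]
  have hexRR : Function.Exact (LinearMap.ker d₁).subtype d₁.rangeRestrict :=
    LinearMap.exact_iff.mpr (by rw [LinearMap.ker_rangeRestrict, Submodule.range_subtype])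
  have hkerφ : LinearMap.ker (rTensor N d₁.rangeRestrict)
      = LinearMap.range (rTensor N (LinearMap.ker d₁).subtype) :=
    LinearMap.exact_iff.mp (rTensor_exact N hexRR d₁.surjective_rangeRestrict)
  have hd' : ∀ x, d₂ x ∈ LinearMap.ker d₁ := fun x => by
    rw [LinearMap.mem_ker, ← LinearMap.comp_apply, hd]; rfl
  have hρ : Function.Surjective (d₂.codRestrict (LinearMap.ker d₁) hd') := by
    rintro ⟨y, hy⟩
    rw [hex] at hy
    obtain ⟨x, rfl⟩ := hy
    exact ⟨x, rfl⟩
  have hU : LinearMap.range (rTensor N d₂) = LinearMap.ker (rTensor N d₁.rangeRestrict) := by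
    rw [hkerφ]
    conv_lhs => rw [← LinearMap.subtype_comp_codRestrict d₂ (LinearMap.ker d₁) hd']
    rw [LinearMap.rTensor_comp, LinearMap.range_comp_of_range_eq_top]
    rw [LinearMap.range_eq_top]
    exact LinearMap.rTensor_surjective N hρ
  exact ⟨auxQuotEquiv _ hφ _ _ _ hT hU⟩

theorem kerSwap {CC DD : Type*} [AddCommGroup CC] [Module R CC] [AddCommGroup DD] [Module R DD]
    [Module.Flat R CC] [Module.Flat R DD] (MC : Submodule R CC) (ND : Submodule R DD) :
    LinearMap.ker (rTensor (↥ND) MC.subtype) = LinearMap.ker (lTensor (↥MC) ND.subtype) := by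
  have h1 : LinearMap.ker (TensorProduct.map MC.subtype ND.subtype)
      = LinearMap.ker (rTensor (↥ND) MC.subtype) := by
    rw [← LinearMap.lTensor_comp_rTensor, LinearMap.ker_comp,
      LinearMap.ker_eq_bot.mpr (Module.Flat.lTensor_preserves_injective_linearMap
        (M := CC) ND.subtype (Submodule.injective_subtype _)), Submodule.comap_bot]
  have h2 : LinearMap.ker (TensorProduct.map MC.subtype ND.subtype)
      = LinearMap.ker (lTensor (↥MC) ND.subtype) := by
    rw [← LinearMap.rTensor_comp_lTensor, LinearMap.ker_comp,
      LinearMap.ker_eq_bot.mpr (Module.Flat.rTensor_preserves_injective_linearMap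
        (M := DD) MC.subtype (Submodule.injective_subtype _)), Submodule.comap_bot]
  exact h1.symm.trans h2

theorem castKerLT {W X Y : Type*} [AddCommGroup W] [Module R W] [AddCommGroup X] [Module R X]
    [AddCommGroup Y] [Module R Y] (p q : Submodule R W) (h : p = q) (f : X →ₗ[R] Y) :
    Nonempty (↥(LinearMap.ker (lTensor (↥p) f)) ≃ₗ[R] ↥(LinearMap.ker (lTensor (↥q) f))) := by
  subst h; exact ⟨LinearEquiv.refl _ _⟩

theorem castKerRT {W X Y : Type*} [AddCommGroup W] [Module R W] [AddCommGroup X] [Module R X]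
    [AddCommGroup Y] [Module R Y] (p q : Submodule R W) (h : p = q) (f : X →ₗ[R] Y) :
    Nonempty (↥(LinearMap.ker (rTensor (↥p) f)) ≃ₗ[R] ↥(LinearMap.ker (rTensor (↥q) f))) := by
  subst h; exact ⟨LinearEquiv.refl _ _⟩

end Steps

set_option maxHeartbeats 1600000 in
/-- balance of Tate homology.  Let `C` and `D` be exact chain
complexes of flat `R`-modules (differentials `dC i : C (i+1) → C i`,
`dD j : D (j+1) → D j`; over a commutative ring right and left modules coincide).
Then for every `n`, `H_{n+1}(Z₀(C) ⊗ D) ≅ H_{n+1}(C ⊗ Z₀(D))` (as `n` ranges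
over `ℤ` this covers every degree), where `Z₀(C) = ker (dC (-1))`,
`Z₀(D) = ker (dD (-1))`, the complex `Z₀(C) ⊗ D` has differentials
`id ⊗ dD = lTensor` and the complex `C ⊗ Z₀(D)` has differentials
`dC ⊗ id = rTensor`. -/
theorem stmt13 {R : Type*} [CommRing R]
    (C : ℤ → Type*) [∀ i, AddCommGroup (C i)] [∀ i, Module R (C i)]
    [∀ i, Module.Flat R (C i)]
    (dC : ∀ i, C (i + 1) →ₗ[R] C i)
    (hdC : ∀ i, (dC i).comp (dC (i + 1)) = 0)
    (hCex : ∀ i, LinearMap.ker (dC i) = LinearMap.range (dC (i + 1)))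
    (D : ℤ → Type*) [∀ j, AddCommGroup (D j)] [∀ j, Module R (D j)]
    [∀ j, Module.Flat R (D j)]
    (dD : ∀ j, D (j + 1) →ₗ[R] D j)
    (hdD : ∀ j, (dD j).comp (dD (j + 1)) = 0)
    (hDex : ∀ j, LinearMap.ker (dD j) = LinearMap.range (dD (j + 1))) :
    ∀ n : ℤ,
      Nonempty
        (homologyOf (LinearMap.lTensor (↥(LinearMap.ker (dC (-1)))) (dD (n + 1)))
            (LinearMap.lTensor (↥(LinearMap.ker (dC (-1)))) (dD n)) ≃ₗ[R]
          homologyOf (LinearMap.rTensor (↥(LinearMap.ker (dD (-1)))) (dC (n + 1)))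
            (LinearMap.rTensor (↥(LinearMap.ker (dD (-1)))) (dC n))) := by
  intro n
  have step : ∀ i j : ℤ,
      Nonempty (↥(LinearMap.ker (lTensor (↥(LinearMap.range (dC (i + 1))))
          ((LinearMap.range (dD j)).subtype))) ≃ₗ[R]
        ↥(LinearMap.ker (lTensor (↥(LinearMap.range (dC i)))
          ((LinearMap.range (dD (j + 1))).subtype)))) := by
    intro i j
    have h := keyLemma (R := R) ((dC i).rangeRestrict) (dC i).surjective_rangeRestrict
      ((dD j).rangeRestrict) (dD j).surjective_rangeRestrict
      (LinearMap.range (dC (i + 1))) (LinearMap.range (dD (j + 1)))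
      (by rw [LinearMap.ker_rangeRestrict]; exact hCex i)
      (by rw [LinearMap.ker_rangeRestrict]; exact hDex j)
    rwa [kerSwap] at h
  have tcast : ∀ i i' j j' : ℤ, i = i' → j = j' →
      Nonempty (↥(LinearMap.ker (lTensor (↥(LinearMap.range (dC i)))
          ((LinearMap.range (dD j)).subtype))) ≃ₗ[R]
        ↥(LinearMap.ker (lTensor (↥(LinearMap.range (dC i')))
          ((LinearMap.range (dD j')).subtype)))) := by
    rintro i i' j j' rfl rfl; exact ⟨LinearEquiv.refl _ _⟩
  have chain : ∀ (i j k : ℤ),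
      Nonempty (↥(LinearMap.ker (lTensor (↥(LinearMap.range (dC i)))
          ((LinearMap.range (dD j)).subtype))) ≃ₗ[R]
        ↥(LinearMap.ker (lTensor (↥(LinearMap.range (dC (i - k))))
          ((LinearMap.range (dD (j + k))).subtype)))) := by
    intro i j k
    induction k using Int.induction_on with
    | zero => exact tcast i (i - 0) j (j + 0) (by omega) (by omega)
    | succ k ih =>
      obtain ⟨e1⟩ := ih
      obtain ⟨e2⟩ := tcast (i - k) ((i - (k + 1)) + 1) (j + k) (j + k) (by omega) rfl
      obtain ⟨e3⟩ := step (i - (k + 1)) (j + k)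
      obtain ⟨e4⟩ := tcast (i - (k + 1)) (i - (k + 1)) ((j + k) + 1) (j + (k + 1)) rfl (by omega)
      exact ⟨e1.trans (e2.trans (e3.trans e4))⟩
    | pred k ih =>
      obtain ⟨e1⟩ := ih
      obtain ⟨e2⟩ := tcast (i - (-k)) ((i - (-k - 1)) - 1) (j + (-k)) ((j + (-k - 1)) + 1)
        (by omega) (by omega)
      obtain ⟨e3⟩ := step ((i - (-k - 1)) - 1) (j + (-k - 1))
      obtain ⟨e4⟩ := tcast ((i - (-k - 1)) - 1 + 1) (i - (-k - 1)) (j + (-k - 1)) (j + (-k - 1))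
        (by omega) rfl
      exact ⟨e1.trans (e2.trans (e3.symm.trans e4))⟩
  obtain ⟨eL⟩ := hstep_lT (R := R) (↥(LinearMap.ker (dC (-1)))) (dD (n + 1)) (dD n)
    (hdD n) (hDex n)
  obtain ⟨eM⟩ := castKerLT (LinearMap.ker (dC (-1))) (LinearMap.range (dC ((-1) + 1)))
    (hCex (-1)) ((LinearMap.range (dD n)).subtype)
  obtain ⟨eC⟩ := chain ((-1) + 1) n ((-1) + 1 - n)
  obtain ⟨eC2⟩ := tcast ((-1) + 1 - ((-1) + 1 - n)) n (n + ((-1) + 1 - n)) ((-1) + 1)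
    (by omega) (by omega)
  have hswap := kerSwap (LinearMap.range (dC n)) (LinearMap.range (dD ((-1) + 1)))
  let eSwap : ↥(LinearMap.ker (lTensor (↥(LinearMap.range (dC n)))
        ((LinearMap.range (dD ((-1) + 1))).subtype))) ≃ₗ[R]
      ↥(LinearMap.ker (rTensor (↥(LinearMap.range (dD ((-1) + 1))))
        ((LinearMap.range (dC n)).subtype))) :=
    LinearEquiv.ofEq _ _ hswap.symm
  obtain ⟨eN⟩ := castKerRT (LinearMap.ker (dD (-1))) (LinearMap.range (dD ((-1) + 1)))
    (hDex (-1)) ((LinearMap.range (dC n)).subtype)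
  obtain ⟨eR⟩ := hstep_rT (R := R) (↥(LinearMap.ker (dD (-1)))) (dC (n + 1)) (dC n)
    (hdC n) (hCex n)
  exact ⟨eL.trans (eM.trans (eC.trans (eC2.trans (eSwap.trans (eN.symm.trans eR.symm)))))⟩
end
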